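/- Let K be an algebraically closed field of characteristic zero, let q be a positive integer, and let σ, Φ ∈ GL_n(K) with σ of finite order and Φ·σ·Φ⁻¹ = σ^q. Assume that K^n is semisimple as a module over the subgroup G of GL_n(K) generated by σ and Φ (equivalently, over the group algebra K[G]). Let W = ker(σ − 1) ⊆ K^n; then W is Φ-invariant, and, writing Φ_W for the restriction of Φ to W, the following identity holds in the polynomial ring K[X]: det(1 − X·Φ) · det(1 − (q·X)·Φ_W) = det(1 − X·(1 + σ + ⋯ + σ^{q−1})·Φ) · det(1 − X·Φ_W). -/

import Mathlib

set_option maxHeartbeats 1000000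

open Matrix Polynomial

section Aux

variable {K : Type*} [Field K]

lemma charpolyRev_toMatrix {M : Type*} [AddCommGroup M] [Module K M] [FiniteDimensional K M]
    {ι : Type*} [Fintype ι] [DecidableEq ι] (b : Module.Basis ι K M) (f : M →ₗ[K] M) :
    Matrix.charpolyRev (LinearMap.toMatrix b b f) = f.charpoly.reverse := by
  rw [← Matrix.reverse_charpoly, LinearMap.charpoly_toMatrix]

lemma charpolyRev_comp_smul {m : Type*} [Fintype m] [DecidableEq m] (a : K) (M : Matrix m m K) :
    (Matrix.charpolyRev M).comp (C a * X) = Matrix.charpolyRev (a • M) := by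
  have h : (Matrix.charpolyRev M).comp (C a * X)
      = eval₂ C (C a * X) (Matrix.charpolyRev M) := rfl
  rw [h, Matrix.charpolyRev, Matrix.charpolyRev, ← Polynomial.coe_eval₂RingHom,
    RingHom.map_det]
  congr 1
  refine Matrix.ext fun i j => ?_
  simp only [RingHom.mapMatrix_apply, Matrix.map_apply, Matrix.sub_apply, Matrix.one_apply,
    Matrix.smul_apply, smul_eq_mul, coe_eval₂RingHom, eval₂_sub, eval₂_mul, eval₂_X, eval₂_C,
    eval₂_one, eval₂_zero, Polynomial.C_mul, apply_ite (eval₂ C (C a * X))]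
  ring

lemma charpoly_eq_mul_of_isCompl {V : Type*} [AddCommGroup V] [Module K V]
    [FiniteDimensional K V] {p q : Submodule K V} (h : IsCompl p q) (f : V →ₗ[K] V)
    (h1 : ∀ x ∈ p, f x ∈ p) (h2 : ∀ x ∈ q, f x ∈ q) :
    f.charpoly = (f.restrict h1).charpoly * (f.restrict h2).charpoly := by
  rw [← LinearMap.charpoly_prodMap,
    ← LinearEquiv.charpoly_conj (Submodule.prodEquivOfIsCompl p q h)]
  congr 1
  apply LinearMap.ext
  intro v
  obtain ⟨⟨a, b⟩, rfl⟩ := (Submodule.prodEquivOfIsCompl p q h).surjective v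
  simp [LinearEquiv.conj_apply, LinearMap.restrict_apply, map_add]

end Aux

theorem charpolyRev_mul_eq_of_semisimple
    {K : Type*} [Field K] [IsAlgClosed K] [CharZero K] (n q : ℕ) (hq : 0 < q)
    (σ Φ : Matrix (Fin n) (Fin n) K)
    (hσ : IsUnit σ) (hΦ : IsUnit Φ)
    (hfin : ∃ m : ℕ, 0 < m ∧ σ ^ m = 1)
    (hconj : Φ * σ = σ ^ q * Φ)
    (hss : ∀ U : Submodule K (Fin n → K),
      U.map σ.mulVecLin ≤ U → U.map Φ.mulVecLin ≤ U →
      ∃ U' : Submodule K (Fin n → K),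
        U'.map σ.mulVecLin ≤ U' ∧ U'.map Φ.mulVecLin ≤ U' ∧ IsCompl U U') :
    ∃ hW : ∀ x ∈ LinearMap.ker (σ - 1).mulVecLin,
        Φ.mulVecLin x ∈ LinearMap.ker (σ - 1).mulVecLin,
      Matrix.charpolyRev Φ *
        (Matrix.charpolyRev
          (LinearMap.toMatrix (Module.finBasis K (LinearMap.ker (σ - 1).mulVecLin))
            (Module.finBasis K (LinearMap.ker (σ - 1).mulVecLin))
            (Φ.mulVecLin.restrict hW))).comp (C (q : K) * X)
      = Matrix.charpolyRev ((∑ i ∈ Finset.range q, σ ^ i) * Φ) *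
        Matrix.charpolyRev
          (LinearMap.toMatrix (Module.finBasis K (LinearMap.ker (σ - 1).mulVecLin))
            (Module.finBasis K (LinearMap.ker (σ - 1).mulVecLin))
            (Φ.mulVecLin.restrict hW)) := by
  classical
  set W := LinearMap.ker (σ - 1).mulVecLin with hWdef
  have hmem : ∀ x : Fin n → K, x ∈ W ↔ σ *ᵥ x = x := by
    intro x
    rw [hWdef, LinearMap.mem_ker, Matrix.mulVecLin_apply, Matrix.sub_mulVec,
      Matrix.one_mulVec, sub_eq_zero]
  have hpow : ∀ (i : ℕ), ∀ x ∈ W, (σ ^ i) *ᵥ x = x := by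
    intro i x hx
    induction i with
    | zero => simp [Matrix.one_mulVec]
    | succ k ih => rw [pow_succ, ← Matrix.mulVec_mulVec, (hmem x).mp hx, ih]
  -- the inverse of Φ
  obtain ⟨u, hu⟩ := hΦ
  set B := ((u⁻¹ : _) : Matrix (Fin n) (Fin n) K) with hB
  have hBΦ : B * Φ = 1 := by rw [hB, ← hu]; exact u.inv_mul
  have hΦB : Φ * B = 1 := by rw [hB, ← hu]; exact u.mul_inv
  have hBconj : σ * B = B * σ ^ q := by
    have h1 : σ = B * (σ ^ q * Φ) := by rw [← hconj, ← mul_assoc, hBΦ, one_mul]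
    calc σ * B = B * (σ ^ q * Φ) * B := by rw [← h1]
      _ = B * σ ^ q * (Φ * B) := by noncomm_ring
      _ = B * σ ^ q := by rw [hΦB, mul_one]
  -- B preserves W
  have hBW : ∀ x ∈ W, B.mulVecLin x ∈ W := by
    intro x hx
    rw [hmem, Matrix.mulVecLin_apply, Matrix.mulVec_mulVec, hBconj, ← Matrix.mulVec_mulVec,
      hpow q x hx]
  have hcomp : ∀ (M N : Matrix (Fin n) (Fin n) K) (x : Fin n → K),
      (M * N).mulVecLin x = M.mulVecLin (N.mulVecLin x) := by
    intro M N x; rw [Matrix.mulVecLin_mul]; rfl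
  have hΦBid : ∀ y : Fin n → K, Φ.mulVecLin (B.mulVecLin y) = y := by
    intro y; rw [← hcomp, hΦB, Matrix.mulVecLin_one]; rfl
  -- Φ preserves W
  have hW : ∀ x ∈ W, Φ.mulVecLin x ∈ W := by
    intro x hx
    have hinj : Function.Injective (B.mulVecLin.restrict hBW) := by
      intro y z hyz
      have h1 : B.mulVecLin (y : Fin n → K) = B.mulVecLin z := by
        rw [← LinearMap.restrict_coe_apply B.mulVecLin hBW y, hyz,
          LinearMap.restrict_coe_apply]
      have h2 := congrArg Φ.mulVecLin h1
      rw [hΦBid, hΦBid] at h2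
      exact Subtype.ext h2
    obtain ⟨z, hz⟩ := LinearMap.injective_iff_surjective.mp hinj ⟨x, hx⟩
    have hz' : B.mulVecLin (z : Fin n → K) = x := by
      rw [← LinearMap.restrict_coe_apply B.mulVecLin hBW z, hz]
    have h3 : Φ.mulVecLin x = (z : Fin n → K) := by rw [← hz', hΦBid]
    rw [h3]; exact z.2
  refine ⟨hW, ?_⟩
  -- get a stable complement W' of W
  have hWσle : W.map σ.mulVecLin ≤ W := by
    rintro _ ⟨x, hx, rfl⟩
    rw [hmem, Matrix.mulVecLin_apply, (hmem x).mp hx]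
    exact (hmem x).mp hx
  have hWΦle : W.map Φ.mulVecLin ≤ W := by rintro _ ⟨x, hx, rfl⟩; exact hW x hx
  obtain ⟨W', hW'σ, hW'Φ, hcompl⟩ := hss W hWσle hWΦle
  have hσ' : ∀ x ∈ W', σ.mulVecLin x ∈ W' := fun x hx => hW'σ ⟨x, hx, rfl⟩
  have hΦ' : ∀ x ∈ W', Φ.mulVecLin x ∈ W' := fun x hx => hW'Φ ⟨x, hx, rfl⟩
  set N := ∑ i ∈ Finset.range q, σ ^ i with hN
  have hsum : N.mulVecLin = ∑ i ∈ Finset.range q, (σ ^ i).mulVecLin := by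
    simp only [← Matrix.toLin'_apply', hN, map_sum]
  have hpow' : ∀ (i : ℕ), ∀ x ∈ W', (σ ^ i).mulVecLin x ∈ W' := by
    intro i
    induction i with
    | zero =>
      intro x hx
      simpa [Matrix.mulVecLin_apply, Matrix.one_mulVec] using hx
    | succ k ih =>
      intro x hx
      have h4 : (σ ^ (k + 1)).mulVecLin x = (σ ^ k).mulVecLin (σ.mulVecLin x) := by
        rw [pow_succ, hcomp]
      rw [h4]
      exact ih _ (hσ' x hx)
  have hNΦ' : ∀ x ∈ W', (N * Φ).mulVecLin x ∈ W' := by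
    intro x hx
    rw [hcomp, hsum, LinearMap.sum_apply]
    exact Submodule.sum_mem _ fun i _ => hpow' i _ (hΦ' x hx)
  have hNΦW : ∀ x ∈ W, (N * Φ).mulVecLin x ∈ W := by
    intro x hx
    rw [hcomp, hsum, LinearMap.sum_apply]
    refine Submodule.sum_mem _ fun i _ => ?_
    have h5 : (σ ^ i).mulVecLin (Φ.mulVecLin x) = Φ.mulVecLin x := by
      rw [Matrix.mulVecLin_apply, hpow i _ (hW x hx)]
    rw [h5]; exact hW x hx
  -- N*Φ acts on W as q • Φ
  have hrW : (N * Φ).mulVecLin.restrict hNΦW = (q : K) • (Φ.mulVecLin.restrict hW) := by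
    apply LinearMap.ext; intro x
    apply Subtype.ext
    have h6 : ((((q : K) • (Φ.mulVecLin.restrict hW)) x : W) : Fin n → K)
        = (q : K) • (Φ.mulVecLin (x : Fin n → K)) := by
      simp [LinearMap.restrict_coe_apply]
    rw [LinearMap.restrict_coe_apply, h6, hcomp, hsum, LinearMap.sum_apply]
    have hfix : ∀ i ∈ Finset.range q,
        (σ ^ i).mulVecLin (Φ.mulVecLin (x : Fin n → K)) = Φ.mulVecLin (x : Fin n → K) :=
      fun i _ => by rw [Matrix.mulVecLin_apply, hpow i _ (hW x x.2)]
    rw [Finset.sum_congr rfl hfix, Finset.sum_const, Finset.card_range,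
      ← Nat.cast_smul_eq_nsmul K]
  -- W' stability of σ - 1 and invertibility there
  have hs' : ∀ x ∈ W', (σ - 1).mulVecLin x ∈ W' := by
    intro x hx
    have h7 : (σ - 1).mulVecLin x = σ.mulVecLin x - x := by
      simp [Matrix.mulVecLin_apply, Matrix.sub_mulVec, Matrix.one_mulVec]
    rw [h7]
    exact Submodule.sub_mem _ (hσ' x hx) hx
  set s := (σ - 1).mulVecLin.restrict hs' with hsdef
  have hsinj : Function.Injective s := by
    apply LinearMap.ker_eq_bot.mp
    apply (Submodule.eq_bot_iff _).mpr
    intro y hy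
    have h8 : (σ - 1).mulVecLin (y : Fin n → K) = 0 := by
      have := congrArg (Subtype.val) (LinearMap.mem_ker.mp hy)
      rwa [LinearMap.restrict_coe_apply] at this
    have h9 : (y : Fin n → K) ∈ W ⊓ W' := ⟨h8, y.2⟩
    rw [hcompl.inf_eq_bot, Submodule.mem_bot] at h9
    exact Subtype.ext h9
  have hsbij : Function.Bijective s := ⟨hsinj, LinearMap.injective_iff_surjective.mp hsinj⟩
  set e : W' ≃ₗ[K] W' := LinearEquiv.ofBijective s hsbij with hedef
  -- key matrix identity : (σ-1) (NΦ) = Φ (σ-1)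
  have hmat : (σ - 1) * (N * Φ) = Φ * (σ - 1) := by
    rw [← mul_assoc, hN, mul_geom_sum, sub_mul, one_mul, ← hconj, mul_sub, mul_one]
  have hconjmap : s ∘ₗ ((N * Φ).mulVecLin.restrict hNΦ')
      = (Φ.mulVecLin.restrict hΦ') ∘ₗ s := by
    apply LinearMap.ext; intro x
    apply Subtype.ext
    simp only [LinearMap.comp_apply]
    rw [LinearMap.restrict_coe_apply, LinearMap.restrict_coe_apply,
      LinearMap.restrict_coe_apply, LinearMap.restrict_coe_apply, ← hcomp, ← hcomp, hmat]
  have hcharW' : ((N * Φ).mulVecLin.restrict hNΦ').charpoly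
      = (Φ.mulVecLin.restrict hΦ').charpoly := by
    have he : e.symm.conj (Φ.mulVecLin.restrict hΦ') = (N * Φ).mulVecLin.restrict hNΦ' := by
      apply LinearMap.ext; intro x
      apply e.injective
      have h10 : e ((e.symm.conj (Φ.mulVecLin.restrict hΦ')) x)
          = (Φ.mulVecLin.restrict hΦ') (e x) := by
        simp [LinearEquiv.conj_apply]
      have h11 : e (((N * Φ).mulVecLin.restrict hNΦ') x)
          = (Φ.mulVecLin.restrict hΦ') (e x) := by
        have he1 : ∀ y : W', e y = s y := fun y => rfl
        rw [he1, he1, ← LinearMap.comp_apply, hconjmap]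
        rfl
      rw [h10, h11]
    rw [← he, LinearEquiv.charpoly_conj]
  -- charpoly decompositions
  have hdecΦ : Φ.mulVecLin.charpoly
      = (Φ.mulVecLin.restrict hW).charpoly * (Φ.mulVecLin.restrict hΦ').charpoly :=
    charpoly_eq_mul_of_isCompl hcompl _ hW hΦ'
  have hdecN : (N * Φ).mulVecLin.charpoly
      = ((N * Φ).mulVecLin.restrict hNΦW).charpoly
        * ((N * Φ).mulVecLin.restrict hNΦ').charpoly :=
    charpoly_eq_mul_of_isCompl hcompl _ hNΦW hNΦ'
  have hM : ∀ M : Matrix (Fin n) (Fin n) K,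
      Matrix.charpolyRev M = M.mulVecLin.charpoly.reverse := by
    intro M
    rw [← Matrix.reverse_charpoly]
    congr 1
    conv_lhs => rw [← LinearMap.toMatrix'_toLin' M, ← LinearMap.toMatrix_eq_toMatrix',
      Matrix.toLin'_apply']
    rw [LinearMap.charpoly_toMatrix]
  have ha : Matrix.charpolyRev (LinearMap.toMatrix (Module.finBasis K W) (Module.finBasis K W)
      (Φ.mulVecLin.restrict hW)) = (Φ.mulVecLin.restrict hW).charpoly.reverse :=
    charpolyRev_toMatrix _ _
  have haq : (Matrix.charpolyRev (LinearMap.toMatrix (Module.finBasis K W)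
        (Module.finBasis K W) (Φ.mulVecLin.restrict hW))).comp (C (q : K) * X)
      = ((q : K) • (Φ.mulVecLin.restrict hW)).charpoly.reverse := by
    rw [charpolyRev_comp_smul]
    have hms : (q : K) • (LinearMap.toMatrix (Module.finBasis K W) (Module.finBasis K W))
          (Φ.mulVecLin.restrict hW)
        = (LinearMap.toMatrix (Module.finBasis K W) (Module.finBasis K W))
          ((q : K) • Φ.mulVecLin.restrict hW) :=
      ((LinearMap.toMatrix (Module.finBasis K W) (Module.finBasis K W)).map_smul _ _).symm
    rw [hms]
    exact charpolyRev_toMatrix _ _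
  rw [hM Φ, hM (N * Φ), haq, ha, hdecΦ, hdecN, hrW, hcharW',
    Polynomial.reverse_mul_of_domain, Polynomial.reverse_mul_of_domain]
  ring
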